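/- For any r ≥ 0 and any discrete memoryless channel W: X → Y on finite alphabets, lim_{α→0+} max_{α≤β≤1} [α(1−β)/(β(1−α))](I_β(W) − r) = max{I_0(W) − r, 0}. -/

import Mathlib

open scoped ENNReal NNReal BigOperators Classical
open Filter

noncomputable section

namespace RST

/-- Base-2 logarithm `ℝ≥0∞ → EReal`, with `log 0 = ⊥` and `log ⊤ = ⊤`. -/
def elog2 (s : ℝ≥0∞) : EReal :=
  if s = 0 then ⊥ else if s = ⊤ then ⊤ else ((Real.logb 2 s.toReal : ℝ) : EReal)

/-- Base-2 logarithm `EReal → EReal` (for nonnegative arguments). -/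
def eLog2 (x : EReal) : EReal :=
  if x = ⊤ then ⊤ else if x ≤ 0 then ⊥ else ((Real.logb 2 x.toReal : ℝ) : EReal)

/-- Base-2 exponential `EReal → ℝ≥0∞`. -/
def epow2 (x : EReal) : ℝ≥0∞ :=
  if x = ⊤ then ⊤ else if x = ⊥ then 0 else ENNReal.ofReal ((2 : ℝ) ^ x.toReal)

variable {X Y : Type*}

/-- A probability distribution on a finite alphabet, as an `ℝ≥0∞`-valued function. -/
def IsDist [Fintype X] (P : X → ℝ≥0∞) : Prop := ∑ x, P x = 1

/-- A discrete memoryless channel: every row is a probability distribution. -/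
def IsChannel [Fintype X] [Fintype Y] (W : X → Y → ℝ≥0∞) : Prop := ∀ x, ∑ y, W x y = 1

/-- Order-`α` Rényi divergence (base 2), with the order `α ∈ [0,∞]` encoded as `ℝ≥0∞`.
The conventions `0/0 = 0` and `a/0 = ∞` (for `a > 0`, `α > 1`) are built into `ℝ≥0∞`
arithmetic.  The second argument is allowed to be an arbitrary nonnegative vector. -/
def renyiD [Fintype X] (α : ℝ≥0∞) (P Q : X → ℝ≥0∞) : EReal :=
  if α = 0 then - elog2 (∑ x ∈ Finset.univ.filter fun x => P x ≠ 0, Q x)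
  else if α = 1 then ∑ x, ((P x).toReal : EReal) * elog2 (P x / Q x)
  else if α = ⊤ then elog2 (⨆ x, P x / Q x)
  else (((α.toReal - 1)⁻¹ : ℝ) : EReal) *
    elog2 (∑ x, P x ^ α.toReal * Q x ^ (1 - α.toReal))

/-- The `X`-marginal of a joint distribution on `X × Y`. -/
def margX [Fintype X] [Fintype Y] (P : X × Y → ℝ≥0∞) : X → ℝ≥0∞ := fun x => ∑ y, P (x, y)

/-- Order-`α` Rényi mutual information `I_α(X:Y)_P = min_{Q_Y} D_α(P‖P_X × Q_Y)`. -/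
def renyiMI [Fintype X] [Fintype Y] (α : ℝ≥0∞) (P : X × Y → ℝ≥0∞) : EReal :=
  ⨅ Q : {Q : Y → ℝ≥0∞ // IsDist Q}, renyiD α P fun p => margX P p.1 * Q.1 p.2

/-- The joint input-output distribution `P_X · W`. -/
def joint [Fintype X] [Fintype Y] (PX : X → ℝ≥0∞) (W : X → Y → ℝ≥0∞) : X × Y → ℝ≥0∞ :=
  fun p => PX p.1 * W p.1 p.2

/-- Order-`α` Rényi capacity `I_α(W) = max_{P_X} I_α(X:Y)_{P_X · W}`. -/
def renyiCap [Fintype X] [Fintype Y] (α : ℝ≥0∞) (W : X → Y → ℝ≥0∞) : EReal :=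
  ⨆ P : {P : X → ℝ≥0∞ // IsDist P}, renyiMI α (joint P.1 W)

/-- `N` is a simulation of a channel `X → Y` with communication cost at most `c` bits:
shared randomness `K = Fin m` with distribution `PK`, a message set `{1,…,M}` with
`log₂ M ≤ c`, an encoder `E` and a decoder `D`. -/
def IsSimulation [Fintype X] [Fintype Y] (c : ℝ) (N : X → Y → ℝ≥0∞) : Prop :=
  ∃ (m M : ℕ) (PK : Fin m → ℝ≥0∞) (E : X → Fin m → Fin M → ℝ≥0∞)
    (D : Fin M → Fin m → Y → ℝ≥0∞),
    0 < M ∧ Real.logb 2 M ≤ c ∧ (∑ k, PK k = 1) ∧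
    (∀ x k, ∑ j, E x k j = 1) ∧ (∀ j k, ∑ y, D j k y = 1) ∧
    ∀ x y, N x y = ∑ k, ∑ j, PK k * E x k j * D j k y

/-- `D_α(W, N) := max_x D_α(W(·|x) ‖ N(·|x))`. -/
def chD [Fintype X] [Fintype Y] (α : ℝ≥0∞) (W N : X → Y → ℝ≥0∞) : EReal :=
  ⨆ x, renyiD α (W x) (N x)

/-- `𝖣_α(W, c) := min_{N ∈ A(W,c)} D_α(W, N)`. -/
def simD [Fintype X] [Fintype Y] (α : ℝ≥0∞) (W : X → Y → ℝ≥0∞) (c : ℝ) : EReal :=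
  ⨅ N : {N : X → Y → ℝ≥0∞ // IsSimulation c N}, chD α W N.1

/-- The `n`-fold memoryless extension `W^{×n}` of a channel `W`. -/
def prodCh [Fintype X] [Fintype Y] (n : ℕ) (W : X → Y → ℝ≥0∞) :
    (Fin n → X) → (Fin n → Y) → ℝ≥0∞ :=
  fun xs ys => ∏ i, W (xs i) (ys i)

/-- A sequence of communication costs with rate at most `r`. -/
def RateOK (r : ℝ) (c : ℕ → ℝ) : Prop :=
  (∀ n, 0 ≤ c n) ∧ Filter.limsup (fun n : ℕ => ((c n / n : ℝ) : EReal)) Filter.atTop ≤ (r : EReal)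

/-- Reliability function `E_rf^{(α)}(W, r)`. -/
def Erf [Fintype X] [Fintype Y] (α : ℝ≥0∞) (W : X → Y → ℝ≥0∞) (r : ℝ) : EReal :=
  ⨆ c : {c : ℕ → ℝ // RateOK r c},
    Filter.liminf
      (fun n : ℕ => (((-1 : ℝ) / n : ℝ) : EReal) * eLog2 (simD α (prodCh n W) (c.1 n)))
      Filter.atTop

/-- Strong converse exponent `E_sc^{(α)}(W, r)`. -/
def Esc [Fintype X] [Fintype Y] (α : ℝ≥0∞) (W : X → Y → ℝ≥0∞) (r : ℝ) : EReal :=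
  ⨅ c : {c : ℕ → ℝ // RateOK r c},
    Filter.limsup
      (fun n : ℕ => (((1 : ℝ) / n : ℝ) : EReal) * simD α (prodCh n W) (c.1 n))
      Filter.atTop

/-- The `α`-Rényi simulation rate `R_RST^{(α)}(W)`. -/
def Rrst [Fintype X] [Fintype Y] (α : ℝ≥0∞) (W : X → Y → ℝ≥0∞) : EReal :=
  ⨅ c : {c : ℕ → ℝ // (∀ n, 0 ≤ c n) ∧
      Filter.limsup (fun n : ℕ => simD α (prodCh n W) (c n)) Filter.atTop = 0},
    Filter.limsup (fun n : ℕ => ((c.1 n / n : ℝ) : EReal)) Filter.atTop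

/-- n-fold product of a joint distribution on `X × Y`, as a distribution on pairs of
sequences. -/
def prodJoint [Fintype X] [Fintype Y] (n : ℕ) (P : X × Y → ℝ≥0∞) :
    (Fin n → X) × (Fin n → Y) → ℝ≥0∞ :=
  fun p => ∏ i, P (p.1 i, p.2 i)

/-- n-fold product distribution. -/
def prodDist [Fintype X] (n : ℕ) (P : X → ℝ≥0∞) : (Fin n → X) → ℝ≥0∞ :=
  fun xs => ∏ i, P (xs i)

/-- The type (empirical count vector) of a sequence. -/
def seqType [Fintype Y] [DecidableEq Y] {n : ℕ} (ys : Fin n → Y) : Y → ℕ :=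
  fun y => (Finset.univ.filter fun i => ys i = y).card

/-- The cardinality of the type class of a sequence. -/
def typeClassCard [Fintype Y] [DecidableEq Y] {n : ℕ} (ys : Fin n → Y) : ℕ :=
  (Finset.univ.filter fun zs : Fin n → Y => seqType zs = seqType ys).card

/-- The number of types of sequences in `Y^n`. -/
def numTypes (Y : Type*) [Fintype Y] [DecidableEq Y] (n : ℕ) : ℕ :=
  (Finset.univ.image fun ys : Fin n → Y => seqType ys).card

/-- `Φ_{Y^n}`: the uniform mixture over type classes of `Y^n`. -/
def PhiY (Y : Type*) [Fintype Y] [DecidableEq Y] (n : ℕ) : (Fin n → Y) → ℝ≥0∞ :=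
  fun ys => ((numTypes Y n : ℝ≥0∞) * (typeClassCard ys : ℝ≥0∞))⁻¹

end RST

namespace RST

section Lemma18Aux
set_option linter.unusedSectionVars false
set_option linter.unusedVariables false

variable {X Y : Type*} [Fintype X] [Fintype Y]

/-! ### `EReal` and `elog2` helpers -/

lemma elog2_coe' {s : ℝ≥0∞} (h0 : s ≠ 0) (ht : s ≠ ⊤) :
    elog2 s = ((Real.logb 2 s.toReal : ℝ) : EReal) := by
  simp [elog2, h0, ht]

lemma elog2_mono : Monotone elog2 := by
  intro s t h
  rcases eq_or_ne s 0 with rfl | hs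
  · simp [elog2]
  rcases eq_or_ne t ⊤ with rfl | ht
  · simp [elog2]
  have ht0 : t ≠ 0 := fun h0 => hs (le_antisymm (h0 ▸ h) zero_le)
  have hst : s ≠ ⊤ := fun h0 => ht (top_le_iff.mp (h0 ▸ h))
  rw [elog2_coe' hs hst, elog2_coe' ht0 ht]
  exact EReal.coe_le_coe_iff.mpr
    (Real.logb_le_logb_of_le one_lt_two (ENNReal.toReal_pos hs hst)
      (ENNReal.toReal_mono ht h))

lemma ereal_mul_le_of_neg {c : ℝ} (hc : c < 0) {x y : EReal} (h : x ≤ y) :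
    (c : EReal) * y ≤ (c : EReal) * x := by
  induction x with
  | bot => simp [EReal.coe_mul_bot_of_neg hc]
  | coe a =>
    induction y with
    | bot => exact absurd h (by simp)
    | coe b =>
      rw [← EReal.coe_mul, ← EReal.coe_mul]
      exact EReal.coe_le_coe_iff.mpr
        (mul_le_mul_of_nonpos_left (EReal.coe_le_coe_iff.mp h) hc.le)
    | top => simp [EReal.coe_mul_top_of_neg hc]
  | top => rw [top_le_iff.mp h]

/-! ### Auxiliary quantities -/

/-- `s_y = ∑_{x : P_X(x) W(y|x) ≠ 0} P_X(x)`. -/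
def sSum (W : X → Y → ℝ≥0∞) (PX : X → ℝ≥0∞) (y : Y) : ℝ≥0∞ :=
  ∑ x ∈ Finset.univ.filter (fun x => PX x * W x y ≠ 0), PX x

/-- `m = max_y s_y`. -/
def mSup (W : X → Y → ℝ≥0∞) (PX : X → ℝ≥0∞) : ℝ≥0∞ :=
  Finset.univ.sup (sSum W PX)

/-- `A_y = ∑_x P_X(x) W(y|x)^β`. -/
def Afun (W : X → Y → ℝ≥0∞) (β : ℝ) (PX : X → ℝ≥0∞) (y : Y) : ℝ≥0∞ :=
  ∑ x, PX x * W x y ^ β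

/-- `T = ∑_y A_y^{1/β}`. -/
def Tsum (W : X → Y → ℝ≥0∞) (β : ℝ) (PX : X → ℝ≥0∞) : ℝ≥0∞ :=
  ∑ y, Afun W β PX y ^ (β⁻¹ : ℝ)

/-- Smallest nonzero transition probability (with `1` filled in for zero entries). -/
def wmin0 (W : X → Y → ℝ≥0∞) : ℝ≥0∞ :=
  Finset.univ.inf (fun p : X × Y => if W p.1 p.2 = 0 then 1 else W p.1 p.2)

variable (W : X → Y → ℝ≥0∞)

lemma W_le_one (hW : IsChannel W) (x : X) (y : Y) : W x y ≤ 1 := by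
  rw [← hW x]
  exact Finset.single_le_sum (fun _ _ => zero_le) (Finset.mem_univ y)

lemma wmin0_pos : 0 < wmin0 W := by
  rw [wmin0, Finset.lt_inf_iff (by simp : (0:ℝ≥0∞) < ⊤)]
  intro p _
  by_cases h : W p.1 p.2 = 0 <;> simp [h, pos_iff_ne_zero]

lemma wmin0_le_one [Nonempty X] [Nonempty Y] (hW : IsChannel W) : wmin0 W ≤ 1 := by
  obtain ⟨x0⟩ := (inferInstance : Nonempty X)
  obtain ⟨y0⟩ := (inferInstance : Nonempty Y)
  refine le_trans (Finset.inf_le (Finset.mem_univ (x0, y0))) ?_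
  by_cases h : W x0 y0 = 0 <;> simp [h, W_le_one W hW]

lemma wmin0_le {x : X} {y : Y} (h : W x y ≠ 0) : wmin0 W ≤ W x y := by
  refine le_trans (Finset.inf_le (Finset.mem_univ (x, y))) ?_
  simp [h]

lemma margX_joint (hW : IsChannel W) (PX : X → ℝ≥0∞) :
    margX (joint PX W) = PX := by
  funext x
  simp [margX, joint, ← Finset.mul_sum, hW x]

lemma sum_support_eq (PX : X → ℝ≥0∞) (Q : Y → ℝ≥0∞) :
    ∑ p ∈ Finset.univ.filter (fun p : X × Y => joint PX W p ≠ 0), PX p.1 * Q p.2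
      = ∑ y, Q y * sSum W PX y := by
  rw [Finset.sum_filter, Fintype.sum_prod_type, Finset.sum_comm]
  refine Finset.sum_congr rfl fun y _ => ?_
  rw [sSum, Finset.sum_filter, Finset.mul_sum]
  refine Finset.sum_congr rfl fun x _ => ?_
  by_cases h : PX x * W x y ≠ 0 <;> simp [joint, h, mul_comm]

lemma sSum_le_mSup (PX : X → ℝ≥0∞) (y : Y) : sSum W PX y ≤ mSup W PX :=
  Finset.le_sup (Finset.mem_univ y)

lemma sSum_le_one {PX : X → ℝ≥0∞} (hPX : IsDist PX) (y : Y) : sSum W PX y ≤ 1 :=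
  le_trans (Finset.sum_le_sum_of_subset (Finset.filter_subset _ _)) (le_of_eq hPX)

lemma mSup_le_one {PX : X → ℝ≥0∞} (hPX : IsDist PX) : mSup W PX ≤ 1 :=
  Finset.sup_le fun y _ => sSum_le_one W hPX y

lemma one_le_sum_sSum [Nonempty Y] (hW : IsChannel W) {PX : X → ℝ≥0∞} (hPX : IsDist PX) :
    (1 : ℝ≥0∞) ≤ ∑ y, sSum W PX y := by
  have h1 : ∑ y, sSum W PX y
      = ∑ x, ∑ y, (if PX x * W x y ≠ 0 then PX x else 0) := by
    rw [Finset.sum_comm]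
    exact Finset.sum_congr rfl fun y _ => by rw [sSum, Finset.sum_filter]
  rw [h1, ← hPX]
  refine Finset.sum_le_sum fun x _ => ?_
  rcases eq_or_ne (PX x) 0 with h | h
  · simp [h]
  · have hy : ∃ y, W x y ≠ 0 := by
      by_contra hc
      push_neg at hc
      have := hW x
      simp [hc] at this
    obtain ⟨y0, hy0⟩ := hy
    have hx : PX x = (if PX x * W x y0 ≠ 0 then PX x else 0) := by
      rw [if_pos (mul_ne_zero h hy0)]
    exact hx.trans_le (Finset.single_le_sum
      (f := fun y => if PX x * W x y ≠ 0 then PX x else 0)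
      (fun _ _ => zero_le) (Finset.mem_univ y0))

lemma card_inv_le_mSup [Nonempty Y] (hW : IsChannel W) {PX : X → ℝ≥0∞} (hPX : IsDist PX) :
    ((Fintype.card Y : ℝ≥0∞))⁻¹ ≤ mSup W PX := by
  have hcard0 : (Fintype.card Y : ℝ≥0∞) ≠ 0 := by
    simp [Fintype.card_ne_zero]
  have hcardt : (Fintype.card Y : ℝ≥0∞) ≠ ⊤ := ENNReal.natCast_ne_top _
  have h1 : (1 : ℝ≥0∞) ≤ (Fintype.card Y : ℝ≥0∞) * mSup W PX := by
    refine le_trans (one_le_sum_sSum W hW hPX) ?_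
    have := Finset.sum_le_card_nsmul Finset.univ (sSum W PX) (mSup W PX)
      (fun y _ => sSum_le_mSup W PX y)
    simpa [nsmul_eq_mul] using this
  calc ((Fintype.card Y : ℝ≥0∞))⁻¹ = ((Fintype.card Y : ℝ≥0∞))⁻¹ * 1 := (mul_one _).symm
    _ ≤ ((Fintype.card Y : ℝ≥0∞))⁻¹ * ((Fintype.card Y : ℝ≥0∞) * mSup W PX) :=
        mul_le_mul_right h1 _
    _ = mSup W PX := by
        rw [← mul_assoc, ENNReal.inv_mul_cancel hcard0 hcardt, one_mul]

lemma mSup_ne_zero [Nonempty Y] (hW : IsChannel W) {PX : X → ℝ≥0∞} (hPX : IsDist PX) :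
    mSup W PX ≠ 0 := by
  have := card_inv_le_mSup W hW hPX
  intro h
  rw [h, le_zero_iff, ENNReal.inv_eq_zero] at this
  exact ENNReal.natCast_ne_top _ this

lemma mSup_ne_top {PX : X → ℝ≥0∞} (hPX : IsDist PX) : mSup W PX ≠ ⊤ :=
  ne_top_of_le_ne_top ENNReal.one_ne_top (mSup_le_one W hPX)

/-! ### The order-0 mutual information -/

lemma renyiMI_zero [Nonempty Y] (hW : IsChannel W) {PX : X → ℝ≥0∞} (hPX : IsDist PX) :
    renyiMI 0 (joint PX W) = - elog2 (mSup W PX) := by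
  obtain ⟨ystar, -, hystar⟩ :=
    Finset.exists_mem_eq_sup Finset.univ Finset.univ_nonempty (sSum W PX)
  have hval : ∀ Q : Y → ℝ≥0∞,
      renyiD 0 (joint PX W) (fun p => margX (joint PX W) p.1 * Q p.2)
        = - elog2 (∑ y, Q y * sSum W PX y) := by
    intro Q
    rw [renyiD, if_pos rfl, margX_joint W hW PX, sum_support_eq]
  apply le_antisymm
  · refine iInf_le_of_le ⟨fun y => if y = ystar then 1 else 0, by simp [IsDist]⟩ ?_
    rw [hval]
    have : ∑ y, (if y = ystar then (1:ℝ≥0∞) else 0) * sSum W PX y = mSup W PX := by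
      rw [mSup, hystar]
      simp
    rw [this]
  · refine le_iInf fun Q => ?_
    rw [hval]
    rw [EReal.neg_le_neg_iff]
    refine elog2_mono ?_
    calc ∑ y, Q.1 y * sSum W PX y ≤ ∑ y, Q.1 y * mSup W PX :=
          Finset.sum_le_sum fun y _ => mul_le_mul_right (sSum_le_mSup W PX y) _
      _ = (∑ y, Q.1 y) * mSup W PX := by rw [Finset.sum_mul]
      _ = mSup W PX := by rw [Q.2, one_mul]

end Lemma18Aux

end RST

namespace RST

section Lemma18Sibson
set_option linter.unusedSectionVars false
set_option linter.unusedVariables false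

variable {X Y : Type*} [Fintype X] [Fintype Y] (W : X → Y → ℝ≥0∞) {β : ℝ}

lemma Afun_le_one (hW : IsChannel W) {PX : X → ℝ≥0∞} (hPX : IsDist PX)
    (hβ0 : 0 < β) (y : Y) : Afun W β PX y ≤ 1 := by
  rw [Afun, ← hPX]
  exact Finset.sum_le_sum fun x _ => by
    calc PX x * W x y ^ β ≤ PX x * 1 :=
          mul_le_mul_right (ENNReal.rpow_le_one (W_le_one W hW x y) hβ0.le) _
      _ = PX x := mul_one _

lemma Afun_ne_top (hW : IsChannel W) {PX : X → ℝ≥0∞} (hPX : IsDist PX)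
    (hβ0 : 0 < β) (y : Y) : Afun W β PX y ≠ ⊤ :=
  ne_top_of_le_ne_top ENNReal.one_ne_top (Afun_le_one W hW hPX hβ0 y)

lemma exists_support {PX : X → ℝ≥0∞} (hW : IsChannel W) (hPX : IsDist PX) [Nonempty Y] :
    ∃ x y, PX x ≠ 0 ∧ W x y ≠ 0 := by
  have hx : ∃ x, PX x ≠ 0 := by
    by_contra hc
    push_neg at hc
    rw [IsDist] at hPX
    simp [hc] at hPX
  obtain ⟨x0, hx0⟩ := hx
  have hy : ∃ y, W x0 y ≠ 0 := by
    by_contra hc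
    push_neg at hc
    have := hW x0
    simp [hc] at this
  obtain ⟨y0, hy0⟩ := hy
  exact ⟨x0, y0, hx0, hy0⟩

lemma Tsum_ne_zero [Nonempty Y] (hW : IsChannel W) {PX : X → ℝ≥0∞} (hPX : IsDist PX)
    (hβ0 : 0 < β) : Tsum W β PX ≠ 0 := by
  obtain ⟨x0, y0, hx0, hy0⟩ := exists_support W hW hPX
  have hA : Afun W β PX y0 ≠ 0 := by
    intro h
    rw [Afun, Finset.sum_eq_zero_iff] at h
    have := h x0 (Finset.mem_univ x0)
    rcases mul_eq_zero.mp this with h' | h'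
    · exact hx0 h'
    · rw [ENNReal.rpow_eq_zero_iff_of_pos hβ0] at h'
      exact hy0 h'
  have hA' : Afun W β PX y0 ^ (β⁻¹ : ℝ) ≠ 0 := by
    rw [Ne, ENNReal.rpow_eq_zero_iff_of_pos (by positivity)]
    exact hA
  intro h
  rw [Tsum, Finset.sum_eq_zero_iff] at h
  exact hA' (h y0 (Finset.mem_univ y0))

lemma Tsum_ne_top (hW : IsChannel W) {PX : X → ℝ≥0∞} (hPX : IsDist PX)
    (hβ0 : 0 < β) : Tsum W β PX ≠ ⊤ := by
  refine ne_top_of_le_ne_top (ENNReal.natCast_ne_top (Fintype.card Y)) ?_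
  rw [Tsum]
  calc ∑ y, Afun W β PX y ^ (β⁻¹ : ℝ) ≤ ∑ _y : Y, (1:ℝ≥0∞) :=
        Finset.sum_le_sum fun y _ =>
          ENNReal.rpow_le_one (Afun_le_one W hW hPX hβ0 y) (by positivity)
    _ = (Fintype.card Y : ℝ≥0∞) := by simp
    _ ≤ _ := le_refl _

lemma sum_joint_rpow (hβ0 : 0 < β) (hβ1 : β < 1) (PX : X → ℝ≥0∞) (Q : Y → ℝ≥0∞) :
    ∑ p : X × Y, joint PX W p ^ β * (PX p.1 * Q p.2) ^ (1-β)
      = ∑ y, Q y ^ (1-β) * Afun W β PX y := by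
  have h1b : (0:ℝ) ≤ 1 - β := by linarith
  rw [Fintype.sum_prod_type, Finset.sum_comm]
  refine Finset.sum_congr rfl fun y _ => ?_
  rw [Afun, Finset.mul_sum]
  refine Finset.sum_congr rfl fun x _ => ?_
  show (PX x * W x y) ^ β * (PX x * Q y) ^ (1-β) = Q y ^ (1-β) * (PX x * W x y ^ β)
  rw [ENNReal.mul_rpow_of_nonneg _ _ hβ0.le, ENNReal.mul_rpow_of_nonneg _ _ h1b]
  have hP : PX x ^ β * PX x ^ (1-β) = PX x := by
    rw [← ENNReal.rpow_add_of_nonneg _ _ hβ0.le h1b]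
    simp
  calc PX x ^ β * W x y ^ β * (PX x ^ (1-β) * Q y ^ (1-β))
      = (PX x ^ β * PX x ^ (1-β)) * (W x y ^ β * Q y ^ (1-β)) := by ring
    _ = Q y ^ (1-β) * (PX x * W x y ^ β) := by rw [hP]; ring

lemma holder_bound (hW : IsChannel W) {PX : X → ℝ≥0∞} (hPX : IsDist PX)
    (hβ0 : 0 < β) (hβ1 : β < 1) {Q : Y → ℝ≥0∞} (hQ : IsDist Q) :
    ∑ y, Q y ^ (1-β) * Afun W β PX y ≤ Tsum W β PX ^ β := by
  have h1b : (0:ℝ) < 1 - β := by linarith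
  have hconj : ((1-β)⁻¹ : ℝ).HolderConjugate β⁻¹ := by
    rw [Real.holderConjugate_iff]
    constructor
    · rw [one_lt_inv_iff₀]
      exact ⟨h1b, by linarith⟩
    · rw [inv_inv, inv_inv]
      ring
  have h := ENNReal.inner_le_Lp_mul_Lq Finset.univ (fun y => Q y ^ (1-β))
    (Afun W β PX) hconj
  simp only [one_div, inv_inv] at h
  have e1 : ∀ y : Y, ((Q y ^ (1-β)) ^ ((1-β)⁻¹ : ℝ)) = Q y := fun y => by
    rw [← ENNReal.rpow_mul, mul_inv_cancel₀ h1b.ne', ENNReal.rpow_one]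
  simp only [e1] at h
  rw [show (∑ y, Q y) = 1 from hQ] at h
  simpa [Tsum, ENNReal.one_rpow] using h

lemma renyiMI_beta [Nonempty Y] (hW : IsChannel W) {PX : X → ℝ≥0∞} (hPX : IsDist PX)
    (hβ0 : 0 < β) (hβ1 : β < 1) :
    renyiMI (ENNReal.ofReal β) (joint PX W)
      = (((β-1)⁻¹ : ℝ) : EReal) * elog2 (Tsum W β PX ^ β) := by
  have h1b : (0:ℝ) < 1 - β := by linarith
  have hT0 : Tsum W β PX ≠ 0 := Tsum_ne_zero W hW hPX hβ0
  have hTt : Tsum W β PX ≠ ⊤ := Tsum_ne_top W hW hPX hβ0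
  have hform : ∀ Q : Y → ℝ≥0∞, renyiD (ENNReal.ofReal β) (joint PX W)
      (fun p => margX (joint PX W) p.1 * Q p.2)
      = (((β-1)⁻¹ : ℝ) : EReal) * elog2 (∑ y, Q y ^ (1-β) * Afun W β PX y) := by
    intro Q
    have h0 : ENNReal.ofReal β ≠ 0 := by
      simp [ENNReal.ofReal_eq_zero, not_le, hβ0]
    have h1 : ENNReal.ofReal β ≠ 1 := by
      rw [Ne, ENNReal.ofReal_eq_one]
      linarith
    have htr : (ENNReal.ofReal β).toReal = β := ENNReal.toReal_ofReal hβ0.le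
    rw [renyiD, if_neg h0, if_neg h1, if_neg ENNReal.ofReal_ne_top, htr,
      margX_joint W hW PX, sum_joint_rpow W hβ0 hβ1 PX Q]
  -- optimal Q
  set T := Tsum W β PX with hTdef
  set Qs : Y → ℝ≥0∞ := fun y => Afun W β PX y ^ (β⁻¹ : ℝ) * T⁻¹ with hQs
  have hQsdist : IsDist Qs := by
    rw [IsDist]
    rw [← Finset.sum_mul]
    rw [show (∑ y, Afun W β PX y ^ (β⁻¹:ℝ)) = T from rfl]
    exact ENNReal.mul_inv_cancel hT0 hTt
  have hQsval : ∑ y, Qs y ^ (1-β) * Afun W β PX y = T ^ β := by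
    have hTb0 : T ^ (1-β) ≠ 0 := by
      rw [Ne, ENNReal.rpow_eq_zero_iff_of_pos h1b]
      exact hT0
    have hTbt : T ^ (1-β) ≠ ⊤ := by
      rw [Ne, ENNReal.rpow_eq_top_iff]
      push_neg
      exact ⟨fun h => absurd h hT0, fun h => absurd h hTt⟩
    have key : ∀ y : Y, Qs y ^ (1-β) * Afun W β PX y
        = Afun W β PX y ^ (β⁻¹ : ℝ) * (T ^ (1-β))⁻¹ := by
      intro y
      rw [hQs]
      rw [ENNReal.mul_rpow_of_nonneg _ _ h1b.le, ENNReal.inv_rpow]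
      rcases eq_or_ne (Afun W β PX y) 0 with hA | hA
      · simp [hA, ENNReal.zero_rpow_of_pos, h1b,
          ENNReal.zero_rpow_of_pos (show (0:ℝ) < β⁻¹ by positivity),
          ENNReal.zero_rpow_of_pos (show (0:ℝ) < β⁻¹ * (1-β) by positivity)]
      · have hAt : Afun W β PX y ≠ ⊤ := Afun_ne_top W hW hPX hβ0 y
        rw [← ENNReal.rpow_mul]
        calc Afun W β PX y ^ (β⁻¹ * (1-β)) * (T ^ (1-β))⁻¹ * Afun W β PX y
            = Afun W β PX y ^ (β⁻¹ * (1-β)) * Afun W β PX y ^ (1:ℝ) * (T ^ (1-β))⁻¹ := by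
              rw [ENNReal.rpow_one]; ring
          _ = Afun W β PX y ^ (β⁻¹ * (1-β) + 1) * (T ^ (1-β))⁻¹ := by
              rw [ENNReal.rpow_add _ _ hA hAt]
          _ = Afun W β PX y ^ (β⁻¹ : ℝ) * (T ^ (1-β))⁻¹ := by
              congr 1
              congr 1
              field_simp
              ring
    rw [Finset.sum_congr rfl fun y _ => key y, ← Finset.sum_mul,
      show (∑ y, Afun W β PX y ^ (β⁻¹:ℝ)) = T from rfl]
    have hsplit : T = T ^ β * T ^ (1-β) := by
      rw [← ENNReal.rpow_add _ _ hT0 hTt]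
      norm_num
    calc T * (T ^ (1-β))⁻¹ = (T ^ β * T ^ (1-β)) * (T ^ (1-β))⁻¹ := by rw [← hsplit]
      _ = T ^ β := by rw [mul_assoc, ENNReal.mul_inv_cancel hTb0 hTbt, mul_one]
  have hneg : ((β-1)⁻¹ : ℝ) < 0 := inv_neg''.mpr (by linarith)
  apply le_antisymm
  · refine iInf_le_of_le ⟨Qs, hQsdist⟩ ?_
    rw [hform, hQsval]
  · refine le_iInf fun Q => ?_
    rw [hform]
    exact ereal_mul_le_of_neg hneg (elog2_mono (holder_bound W hW hPX hβ0 hβ1 Q.2))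

end Lemma18Sibson

end RST

namespace RST

section Lemma18Bounds
set_option linter.unusedSectionVars false
set_option linter.unusedVariables false

variable {X Y : Type*} [Fintype X] [Fintype Y]

/-- `log₂ |Y|`. -/
def LYc (Y : Type*) [Fintype Y] : ℝ := Real.logb 2 (Fintype.card Y)

/-- `-log₂ w_min`. -/
def Kc (W : X → Y → ℝ≥0∞) : ℝ := -(Real.logb 2 (wmin0 W).toReal)

variable (W : X → Y → ℝ≥0∞) {β : ℝ} {PX : X → ℝ≥0∞}

lemma Afun_filter (hβ0 : 0 < β) (y : Y) :
    ∑ x ∈ Finset.univ.filter (fun x => PX x * W x y ≠ 0), PX x * W x y ^ β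
      = Afun W β PX y := by
  rw [Afun]
  refine Finset.sum_filter_of_ne fun x _ hf => ?_
  rcases eq_or_ne (PX x * W x y) 0 with h | h
  · exfalso
    apply hf
    rcases mul_eq_zero.mp h with h' | h'
    · simp [h']
    · simp [h', ENNReal.zero_rpow_of_pos hβ0]
  · exact h

lemma Afun_le_sSum (hW : IsChannel W) (hβ0 : 0 < β) (y : Y) :
    Afun W β PX y ≤ sSum W PX y := by
  rw [← Afun_filter W hβ0 y, sSum]
  refine Finset.sum_le_sum fun x _ => ?_
  calc PX x * W x y ^ β ≤ PX x * 1 :=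
        mul_le_mul_right (ENNReal.rpow_le_one (W_le_one W hW x y) hβ0.le) _
    _ = PX x := mul_one _

lemma sSum_le_Afun (hβ0 : 0 < β) (y : Y) :
    wmin0 W ^ β * sSum W PX y ≤ Afun W β PX y := by
  rw [← Afun_filter W hβ0 y, sSum, Finset.mul_sum]
  refine Finset.sum_le_sum fun x hx => ?_
  have hW0 : W x y ≠ 0 := by
    intro h
    exact (Finset.mem_filter.mp hx).2 (by simp [h])
  calc wmin0 W ^ β * PX x = PX x * wmin0 W ^ β := mul_comm _ _
    _ ≤ PX x * W x y ^ β :=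
        mul_le_mul_right (ENNReal.rpow_le_rpow (wmin0_le W hW0) hβ0.le) _

lemma Sstar_lower [Nonempty Y] (hβ0 : 0 < β) :
    wmin0 W ^ β * mSup W PX ≤ Tsum W β PX ^ β := by
  obtain ⟨ystar, -, hystar⟩ :=
    Finset.exists_mem_eq_sup Finset.univ Finset.univ_nonempty (sSum W PX)
  have h1 : wmin0 W ^ β * mSup W PX ≤ Afun W β PX ystar := by
    rw [mSup, hystar]
    exact sSum_le_Afun W hβ0 ystar
  have h2 : Afun W β PX ystar ^ (β⁻¹ : ℝ) ≤ Tsum W β PX :=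
    Finset.single_le_sum (f := fun y => Afun W β PX y ^ (β⁻¹:ℝ))
      (fun _ _ => zero_le) (Finset.mem_univ ystar)
  calc wmin0 W ^ β * mSup W PX
      = ((wmin0 W ^ β * mSup W PX) ^ (β⁻¹:ℝ)) ^ β := by
        rw [← ENNReal.rpow_mul, inv_mul_cancel₀ hβ0.ne', ENNReal.rpow_one]
    _ ≤ (Afun W β PX ystar ^ (β⁻¹:ℝ)) ^ β :=
        ENNReal.rpow_le_rpow (ENNReal.rpow_le_rpow h1 (by positivity)) hβ0.le
    _ ≤ Tsum W β PX ^ β := ENNReal.rpow_le_rpow h2 hβ0.le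

lemma Sstar_upper (hW : IsChannel W) (hβ0 : 0 < β) :
    Tsum W β PX ^ β ≤ (Fintype.card Y : ℝ≥0∞) ^ β * mSup W PX := by
  have hT : Tsum W β PX ≤ (Fintype.card Y : ℝ≥0∞) * mSup W PX ^ (β⁻¹:ℝ) := by
    rw [Tsum]
    have := Finset.sum_le_card_nsmul Finset.univ (fun y => Afun W β PX y ^ (β⁻¹:ℝ))
      (mSup W PX ^ (β⁻¹:ℝ)) (fun y _ => ENNReal.rpow_le_rpow
        (le_trans (Afun_le_sSum W hW hβ0 y) (sSum_le_mSup W PX y)) (by positivity))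
    simpa [nsmul_eq_mul] using this
  calc Tsum W β PX ^ β ≤ ((Fintype.card Y : ℝ≥0∞) * mSup W PX ^ (β⁻¹:ℝ)) ^ β :=
        ENNReal.rpow_le_rpow hT hβ0.le
    _ = (Fintype.card Y : ℝ≥0∞) ^ β * mSup W PX := by
        rw [ENNReal.mul_rpow_of_nonneg _ _ hβ0.le, ← ENNReal.rpow_mul,
          inv_mul_cancel₀ hβ0.ne', ENNReal.rpow_one]

lemma LYc_nonneg (Y : Type*) [Fintype Y] [Nonempty Y] : 0 ≤ LYc Y := by
  rw [LYc]
  exact Real.logb_nonneg one_lt_two (by exact_mod_cast Fintype.card_pos)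

lemma Kc_nonneg [Nonempty X] [Nonempty Y] (hW : IsChannel W) : 0 ≤ Kc W := by
  rw [Kc, neg_nonneg]
  refine Real.logb_nonpos one_lt_two ENNReal.toReal_nonneg ?_
  calc (wmin0 W).toReal ≤ (1:ℝ≥0∞).toReal :=
        ENNReal.toReal_mono ENNReal.one_ne_top (wmin0_le_one W hW)
    _ = 1 := by simp

/-- Real-valued form and quantitative bounds for the mutual informations. -/
lemma MI_bounds [Nonempty X] [Nonempty Y] (hW : IsChannel W) (hPX : IsDist PX) :
    ∃ i0 : ℝ, renyiMI 0 (joint PX W) = (i0 : EReal) ∧ 0 ≤ i0 ∧ i0 ≤ LYc Y ∧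
      ∀ β : ℝ, 0 < β → β < 1 → ∃ ib : ℝ,
        renyiMI (ENNReal.ofReal β) (joint PX W) = (ib : EReal) ∧
        |ib - i0| ≤ β / (1-β) * (LYc Y + Kc W) := by
  have hm0 : mSup W PX ≠ 0 := mSup_ne_zero W hW hPX
  have hmt : mSup W PX ≠ ⊤ := mSup_ne_top W hPX
  set mr : ℝ := (mSup W PX).toReal with hmr
  have hmpos : 0 < mr := ENNReal.toReal_pos hm0 hmt
  have hm1 : mr ≤ 1 := by
    calc mr ≤ (1:ℝ≥0∞).toReal := ENNReal.toReal_mono ENNReal.one_ne_top (mSup_le_one W hPX)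
      _ = 1 := by simp
  have hcr : (1:ℝ) ≤ (Fintype.card Y : ℝ) := by exact_mod_cast Fintype.card_pos
  have hmc : ((Fintype.card Y : ℝ))⁻¹ ≤ mr := by
    have := ENNReal.toReal_mono hmt (card_inv_le_mSup W hW hPX)
    rwa [ENNReal.toReal_inv, ENNReal.toReal_natCast] at this
  have hI0LY : -(Real.logb 2 mr) ≤ LYc Y := by
    rw [LYc, neg_le, ← Real.logb_inv]
    exact Real.logb_le_logb_of_le one_lt_two (by positivity) hmc
  have hI00 : 0 ≤ -(Real.logb 2 mr) := by
    rw [neg_nonneg]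
    exact Real.logb_nonpos one_lt_two hmpos.le hm1
  refine ⟨-(Real.logb 2 mr), ?_, ?_, ?_, ?_⟩
  · rw [renyiMI_zero W hW hPX, elog2_coe' hm0 hmt, ← EReal.coe_neg]
  · exact hI00
  · exact hI0LY
  · intro β hβ0 hβ1
    have h1b : (0:ℝ) < 1 - β := by linarith
    have hT0 : Tsum W β PX ≠ 0 := Tsum_ne_zero W hW hPX hβ0
    have hTt : Tsum W β PX ≠ ⊤ := Tsum_ne_top W hW hPX hβ0
    have hS0 : Tsum W β PX ^ β ≠ 0 := by
      rw [Ne, ENNReal.rpow_eq_zero_iff_of_pos hβ0]; exact hT0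
    have hSt : Tsum W β PX ^ β ≠ ⊤ := ENNReal.rpow_ne_top_of_nonneg hβ0.le hTt
    set sr : ℝ := (Tsum W β PX ^ β).toReal with hsr
    have hsrpos : 0 < sr := ENNReal.toReal_pos hS0 hSt
    -- real bounds on sr
    set wr : ℝ := (wmin0 W).toReal with hwr
    have hwrpos : 0 < wr :=
      ENNReal.toReal_pos (wmin0_pos W).ne' (ne_top_of_le_ne_top ENNReal.one_ne_top (wmin0_le_one W hW))
    have hsrlow : wr ^ β * mr ≤ sr := by
      have := ENNReal.toReal_mono hSt (Sstar_lower W hβ0)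
      rwa [ENNReal.toReal_mul, ← ENNReal.toReal_rpow] at this
    have hsrup : sr ≤ (Fintype.card Y : ℝ) ^ β * mr := by
      have hfin : (Fintype.card Y : ℝ≥0∞) ^ β * mSup W PX ≠ ⊤ :=
        ENNReal.mul_ne_top (ENNReal.rpow_ne_top_of_nonneg hβ0.le (ENNReal.natCast_ne_top _)) hmt
      have h := ENNReal.toReal_mono hfin (Sstar_upper W hW hβ0)
      rw [ENNReal.toReal_mul] at h
      rw [show ((Fintype.card Y : ℝ≥0∞) ^ β).toReal = (Fintype.card Y : ℝ) ^ β by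
        rw [← ENNReal.toReal_rpow, ENNReal.toReal_natCast]] at h
      exact h
    -- logb bounds
    set a : ℝ := Real.logb 2 sr with ha
    have halow : β * Real.logb 2 wr + Real.logb 2 mr ≤ a := by
      have h1 : Real.logb 2 (wr ^ β * mr) ≤ a :=
        Real.logb_le_logb_of_le one_lt_two (by positivity) hsrlow
      rwa [Real.logb_mul (by positivity) hmpos.ne',
        Real.logb_rpow_eq_mul_logb_of_pos hwrpos] at h1
    have haup : a ≤ β * Real.logb 2 (Fintype.card Y : ℝ) + Real.logb 2 mr := by
      have h1 : a ≤ Real.logb 2 ((Fintype.card Y : ℝ) ^ β * mr) :=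
        Real.logb_le_logb_of_le one_lt_two hsrpos hsrup
      rwa [Real.logb_mul (by positivity) hmpos.ne',
        Real.logb_rpow_eq_mul_logb_of_pos (by linarith)] at h1
    refine ⟨(β-1)⁻¹ * a, ?_, ?_⟩
    · rw [renyiMI_beta W hW hPX hβ0 hβ1, elog2_coe' hS0 hSt, ← EReal.coe_mul]
    · -- arithmetic
      set i0 : ℝ := -(Real.logb 2 mr) with hi0
      set K : ℝ := Kc W with hK
      set LY : ℝ := LYc Y with hLY
      have hKdef : Real.logb 2 wr = -K := by rw [hK, Kc, neg_neg, hwr]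
      have hLYdef : Real.logb 2 (Fintype.card Y : ℝ) = LY := rfl
      have hi0LY : i0 ≤ LY := hI0LY
      have hi00 : 0 ≤ i0 := hI00
      have hK0 : 0 ≤ K := Kc_nonneg W hW
      rw [hKdef] at halow
      rw [hLYdef] at haup
      -- halow : β * (-K) + -i0 ≤ a,  haup : a ≤ β * LY + -i0
      have hd : (β - 1)⁻¹ = -((1-β)⁻¹) := by
        rw [← inv_neg]
        ring_nf
      have hdpos : 0 < (1-β)⁻¹ := by positivity
      have hcancel : (1-β)⁻¹ * (1-β) = 1 := inv_mul_cancel₀ h1b.ne'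
      have hdb : (1-β)⁻¹ - 1 = β * (1-β)⁻¹ := by
        field_simp
        ring
      rw [abs_le]
      constructor
      · rw [hd]
        have h2 : -((1-β)⁻¹) * (β * LY + -i0) ≤ -((1-β)⁻¹) * a := by
          have := mul_le_mul_of_nonneg_left haup hdpos.le
          linarith
        have h4 : 0 ≤ β * (1-β)⁻¹ * i0 := by positivity
        have h5 : 0 ≤ β * (1-β)⁻¹ * K :=
          mul_nonneg (by positivity) hK0
        rw [div_eq_mul_inv]
        nlinarith [h2, hdb, h4, h5]
      · rw [hd]
        have h2 : -((1-β)⁻¹) * a ≤ -((1-β)⁻¹) * (β * (-K) + -i0) := by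
          have := mul_le_mul_of_nonneg_left halow hdpos.le
          linarith
        have h3 : β * (1-β)⁻¹ * i0 ≤ β * (1-β)⁻¹ * LY :=
          mul_le_mul_of_nonneg_left hi0LY (by positivity)
        rw [div_eq_mul_inv]
        nlinarith [h2, h3, hdb]

end Lemma18Bounds

end RST

namespace RST

section Lemma18Cap
set_option linter.unusedSectionVars false
set_option linter.unusedVariables false

variable {X Y : Type*} [Fintype X] [Fintype Y]

lemma cap_bounds [Nonempty X] [Nonempty Y] (W : X → Y → ℝ≥0∞) (hW : IsChannel W) :
    ∃ c0 : ℝ, renyiCap 0 W = (c0 : EReal) ∧ 0 ≤ c0 ∧ c0 ≤ LYc Y ∧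
      ∀ β : ℝ, 0 < β → β < 1 → ∃ cb : ℝ,
        renyiCap (ENNReal.ofReal β) W = (cb : EReal) ∧
        |cb - c0| ≤ β / (1-β) * (LYc Y + Kc W) := by
  -- the uniform input distribution
  have hP0 : IsDist (fun _ : X => ((Fintype.card X : ℝ≥0∞))⁻¹) := by
    rw [IsDist, Finset.sum_const, nsmul_eq_mul, Finset.card_univ]
    exact ENNReal.mul_inv_cancel (by simp [Fintype.card_ne_zero]) (ENNReal.natCast_ne_top _)
  have hub : renyiCap 0 W ≤ ((LYc Y : ℝ) : EReal) := by
    refine iSup_le fun P => ?_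
    obtain ⟨i0, h1, h2, h3, -⟩ := MI_bounds W hW P.2
    rw [h1]
    exact EReal.coe_le_coe_iff.mpr h3
  have hlb : ((0:ℝ) : EReal) ≤ renyiCap 0 W := by
    refine le_trans ?_ (le_iSup _ (⟨_, hP0⟩ : {P : X → ℝ≥0∞ // IsDist P}))
    obtain ⟨i0, h1, h2, -, -⟩ := MI_bounds W hW hP0
    rw [h1]
    exact EReal.coe_le_coe_iff.mpr h2
  have hnt : renyiCap 0 W ≠ ⊤ := (lt_of_le_of_lt hub (EReal.coe_lt_top _)).ne
  have hnb : renyiCap 0 W ≠ ⊥ := (lt_of_lt_of_le (EReal.bot_lt_coe _) hlb).ne'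
  set c0 : ℝ := (renyiCap 0 W).toReal with hc0def
  have hc0 : renyiCap 0 W = (c0 : EReal) := (EReal.coe_toReal hnt hnb).symm
  have hc00 : 0 ≤ c0 := by
    rw [hc0] at hlb
    exact EReal.coe_le_coe_iff.mp hlb
  have hc0LY : c0 ≤ LYc Y := by
    rw [hc0] at hub
    exact EReal.coe_le_coe_iff.mp hub
  refine ⟨c0, hc0, hc00, hc0LY, fun β hβ0 hβ1 => ?_⟩
  set ε : ℝ := β / (1-β) * (LYc Y + Kc W) with hεdef
  have hβub : renyiCap (ENNReal.ofReal β) W ≤ ((c0 + ε : ℝ) : EReal) := by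
    refine iSup_le fun P => ?_
    obtain ⟨i0, h1, h2, h3, h4⟩ := MI_bounds W hW P.2
    obtain ⟨ib, hb1, hb2⟩ := h4 β hβ0 hβ1
    rw [hb1]
    refine EReal.coe_le_coe_iff.mpr ?_
    have hi0c0 : i0 ≤ c0 := by
      have h5 : renyiMI 0 (joint P.1 W) ≤ renyiCap 0 W :=
        le_iSup (fun P : {P : X → ℝ≥0∞ // IsDist P} => renyiMI 0 (joint P.1 W)) P
      rw [h1, hc0] at h5
      exact EReal.coe_le_coe_iff.mp h5
    have := (abs_le.mp hb2).2
    linarith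
  have hβlb : ∀ η : ℝ, 0 < η → ((c0 - ε - η : ℝ) : EReal) ≤ renyiCap (ENNReal.ofReal β) W := by
    intro η hη
    have hlt : ((c0 - η : ℝ) : EReal) < renyiCap 0 W := by
      rw [hc0]
      exact EReal.coe_lt_coe_iff.mpr (by linarith)
    obtain ⟨P, hP⟩ := lt_iSup_iff.mp hlt
    obtain ⟨i0, h1, h2, h3, h4⟩ := MI_bounds W hW P.2
    obtain ⟨ib, hb1, hb2⟩ := h4 β hβ0 hβ1
    rw [h1] at hP
    have hi0 : c0 - η < i0 := EReal.coe_lt_coe_iff.mp hP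
    have h6 : renyiMI (ENNReal.ofReal β) (joint P.1 W) ≤ renyiCap (ENNReal.ofReal β) W :=
      le_iSup (fun P : {P : X → ℝ≥0∞ // IsDist P} => renyiMI (ENNReal.ofReal β) (joint P.1 W)) P
    refine le_trans ?_ h6
    rw [hb1]
    refine EReal.coe_le_coe_iff.mpr ?_
    have := (abs_le.mp hb2).1
    linarith
  have hnt' : renyiCap (ENNReal.ofReal β) W ≠ ⊤ :=
    (lt_of_le_of_lt hβub (EReal.coe_lt_top _)).ne
  have hnb' : renyiCap (ENNReal.ofReal β) W ≠ ⊥ :=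
    (lt_of_lt_of_le (EReal.bot_lt_coe _) (hβlb 1 one_pos)).ne'
  set cb : ℝ := (renyiCap (ENNReal.ofReal β) W).toReal with hcbdef
  have hcb : renyiCap (ENNReal.ofReal β) W = (cb : EReal) := (EReal.coe_toReal hnt' hnb').symm
  refine ⟨cb, hcb, ?_⟩
  have hub' : cb ≤ c0 + ε := by
    rw [hcb] at hβub
    exact EReal.coe_le_coe_iff.mp hβub
  have hlb' : c0 - ε ≤ cb := by
    refine le_of_forall_pos_le_add fun η hη => ?_
    have := hβlb η hη
    rw [hcb] at this
    have := EReal.coe_le_coe_iff.mp this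
    linarith
  rw [abs_le]
  exact ⟨by linarith, by linarith⟩

end Lemma18Cap

end RST

namespace RST

/-- **Lemma 18.**  For any `r ≥ 0` and any discrete memoryless channel `W`,
`lim_{α → 0+} max_{α ≤ β ≤ 1} (α(1-β))/(β(1-α)) (I_β(W) - r) = |I_0(W) - r|⁺`. -/
theorem sc_exponent_limit_alpha_zero
    {X Y : Type*} [Fintype X] [Fintype Y] [Nonempty X] [Nonempty Y]
    (W : X → Y → ℝ≥0∞) (hW : IsChannel W) (r : ℝ) (hr : 0 ≤ r) :
    Filter.Tendsto
      (fun α : ℝ =>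
        ⨆ β : {β : ℝ // α ≤ β ∧ β ≤ 1},
          (((α * (1 - β.1)) / (β.1 * (1 - α)) : ℝ) : EReal) *
            (renyiCap (ENNReal.ofReal β.1) W - (r : EReal)))
      (nhdsWithin 0 (Set.Ioi 0))
      (nhds (max (renyiCap 0 W - (r : EReal)) 0)) := by
  obtain ⟨c0, hC0, hc00, hc0LY, hb⟩ := cap_bounds W hW
  set L : ℝ := LYc Y + Kc W with hLdef
  have hL0 : 0 ≤ L := add_nonneg (LYc_nonneg Y) (Kc_nonneg W hW)
  set M : ℝ := max (c0 - r) 0 with hMdef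
  have hM0 : 0 ≤ M := le_max_right _ _
  have htarget : max (renyiCap 0 W - (r : EReal)) 0 = ((M : ℝ) : EReal) := by
    rw [hC0, ← EReal.coe_sub, hMdef, ← EReal.coe_zero]
    exact (EReal.coe_strictMono.monotone.map_max (a := c0 - r) (b := 0)).symm
  rw [htarget]
  have key : ∀ α : ℝ, α ∈ Set.Ioo (0:ℝ) (1/2) →
      ((M - α/(1-α)*L : ℝ) : EReal) ≤
        (⨆ β : {β : ℝ // α ≤ β ∧ β ≤ 1},
          (((α * (1 - β.1)) / (β.1 * (1 - α)) : ℝ) : EReal) *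
            (renyiCap (ENNReal.ofReal β.1) W - (r : EReal))) ∧
      (⨆ β : {β : ℝ // α ≤ β ∧ β ≤ 1},
          (((α * (1 - β.1)) / (β.1 * (1 - α)) : ℝ) : EReal) *
            (renyiCap (ENNReal.ofReal β.1) W - (r : EReal)))
        ≤ ((M + α/(1-α)*L : ℝ) : EReal) := by
    intro α hα
    obtain ⟨hα0, hα2⟩ := hα
    have hα1 : α < 1 := by linarith
    have h1a : (0:ℝ) < 1 - α := by linarith
    have hd0 : 0 ≤ α/(1-α)*L := mul_nonneg (div_nonneg hα0.le h1a.le) hL0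
    constructor
    · -- lower bound
      have hzero : (0 : EReal) ≤
          ⨆ β : {β : ℝ // α ≤ β ∧ β ≤ 1},
            (((α * (1 - β.1)) / (β.1 * (1 - α)) : ℝ) : EReal) *
              (renyiCap (ENNReal.ofReal β.1) W - (r : EReal)) := by
        refine le_trans ?_ (le_iSup _ (⟨1, hα1.le, le_refl 1⟩ : {β : ℝ // α ≤ β ∧ β ≤ 1}))
        rw [show ((α * (1 - (1:ℝ))) / ((1:ℝ) * (1 - α)) : ℝ) = 0 by norm_num,
          EReal.coe_zero, EReal.zero_mul]
      obtain ⟨cα, hcα1, hcα2⟩ := hb α hα0 hα1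
      have hαterm : ((cα - r : ℝ) : EReal) ≤
          ⨆ β : {β : ℝ // α ≤ β ∧ β ≤ 1},
            (((α * (1 - β.1)) / (β.1 * (1 - α)) : ℝ) : EReal) *
              (renyiCap (ENNReal.ofReal β.1) W - (r : EReal)) := by
        refine le_trans ?_ (le_iSup _ (⟨α, le_refl α, hα1.le⟩ : {β : ℝ // α ≤ β ∧ β ≤ 1}))
        have hco : ((α * (1 - α)) / (α * (1 - α)) : ℝ) = 1 := div_self (by positivity)
        rw [hcα1, hco, ← EReal.coe_sub, EReal.coe_one, one_mul]
      rcases le_or_gt (c0 - r) 0 with hcase | hcase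
      · have hMeq : M = 0 := max_eq_right hcase
        calc ((M - α/(1-α)*L : ℝ) : EReal) ≤ ((0:ℝ) : EReal) :=
              EReal.coe_le_coe_iff.mpr (by rw [hMeq]; linarith)
          _ ≤ _ := by rw [EReal.coe_zero]; exact hzero
      · have hMeq : M = c0 - r := max_eq_left hcase.le
        refine le_trans ?_ hαterm
        refine EReal.coe_le_coe_iff.mpr ?_
        have h5 := (abs_le.mp hcα2).1
        rw [hMeq]
        linarith
    · -- upper bound
      refine iSup_le fun β => ?_
      obtain ⟨hαβ, hβle1⟩ := β.2
      rcases eq_or_lt_of_le hβle1 with hbeq | hblt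
      · rw [show ((α * (1 - β.1)) / (β.1 * (1 - α)) : ℝ) = 0 by rw [hbeq]; norm_num,
          EReal.coe_zero, EReal.zero_mul, ← EReal.coe_zero]
        exact EReal.coe_le_coe_iff.mpr (by linarith)
      · have hβ0 : 0 < β.1 := lt_of_lt_of_le hα0 hαβ
        have h1b : (0:ℝ) < 1 - β.1 := by linarith
        obtain ⟨cb, hcb1, hcb2⟩ := hb β.1 hβ0 hblt
        rw [hcb1, ← EReal.coe_sub, ← EReal.coe_mul]
        refine EReal.coe_le_coe_iff.mpr ?_
        have hco0 : 0 ≤ (α * (1 - β.1)) / (β.1 * (1 - α)) :=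
          div_nonneg (mul_nonneg hα0.le h1b.le) (by positivity)
        have hco1 : (α * (1 - β.1)) / (β.1 * (1 - α)) ≤ 1 := by
          rw [div_le_one (by positivity)]
          nlinarith
        have hcoe : (α * (1 - β.1)) / (β.1 * (1 - α)) * (β.1/(1-β.1)*L) = α/(1-α)*L := by
          field_simp
        have hcb_up : cb ≤ c0 + β.1/(1-β.1)*L := by
          have := (abs_le.mp hcb2).2
          linarith
        have hMc : (α * (1 - β.1)) / (β.1 * (1 - α)) * (c0 - r) ≤ M := by
          rcases le_or_gt (c0 - r) 0 with h | h
          · exact le_trans (mul_nonpos_of_nonneg_of_nonpos hco0 h) hM0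
          · calc (α * (1 - β.1)) / (β.1 * (1 - α)) * (c0 - r) ≤ 1 * (c0 - r) :=
                  mul_le_mul_of_nonneg_right hco1 h.le
              _ = c0 - r := one_mul _
              _ ≤ M := le_max_left _ _
        calc (α * (1 - β.1)) / (β.1 * (1 - α)) * (cb - r)
            ≤ (α * (1 - β.1)) / (β.1 * (1 - α)) * ((c0 - r) + β.1/(1-β.1)*L) :=
              mul_le_mul_of_nonneg_left (by linarith) hco0
          _ = (α * (1 - β.1)) / (β.1 * (1 - α)) * (c0 - r)
              + (α * (1 - β.1)) / (β.1 * (1 - α)) * (β.1/(1-β.1)*L) := by ring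
          _ ≤ M + α/(1-α)*L := by rw [hcoe]; exact add_le_add_left hMc _
  have hmem : Set.Ioo (0:ℝ) (1/2) ∈ nhdsWithin (0:ℝ) (Set.Ioi 0) :=
    Ioo_mem_nhdsGT_of_mem ⟨le_refl 0, by norm_num⟩
  have hquot : Filter.Tendsto (fun α : ℝ => α/(1-α)*L) (nhdsWithin (0:ℝ) (Set.Ioi 0)) (nhds 0) := by
    have hc : ContinuousAt (fun α : ℝ => α/(1-α)*L) 0 := by
      have h1 : ContinuousAt (fun α : ℝ => α/(1-α)) 0 :=
        continuousAt_id.div (continuousAt_const.sub continuousAt_id) (by norm_num)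
      exact h1.mul continuousAt_const
    have h2 := hc.tendsto
    norm_num at h2
    exact h2.mono_left nhdsWithin_le_nhds
  have hlo : Filter.Tendsto (fun α : ℝ => ((M - α/(1-α)*L : ℝ) : EReal))
      (nhdsWithin (0:ℝ) (Set.Ioi 0)) (nhds ((M : ℝ) : EReal)) := by
    rw [EReal.tendsto_coe]
    simpa using tendsto_const_nhds.sub hquot
  have hhi : Filter.Tendsto (fun α : ℝ => ((M + α/(1-α)*L : ℝ) : EReal))
      (nhdsWithin (0:ℝ) (Set.Ioi 0)) (nhds ((M : ℝ) : EReal)) := by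
    rw [EReal.tendsto_coe]
    simpa using tendsto_const_nhds.add hquot
  exact tendsto_of_tendsto_of_tendsto_of_le_of_le' hlo hhi
    (Filter.eventually_of_mem hmem fun α hα => (key α hα).1)
    (Filter.eventually_of_mem hmem fun α hα => (key α hα).2)

end RST
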